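/- For a simplicial module M, the operator φ_n = Σ_{i=0}^n (-1)^i s_{n,i} p_{n,i} : M_n → M_{n+1} satisfies b_{n+1} φ_n + φ_{n-1} b_n = p_n − 1, where b is the simplicial differential, p_{n,i} = (1 − s_{n-1,i}∂_{n,i+1})···(1 − s_{n-1,n-1}∂_{n,n}), and p_n = p_{n,0}. -/

import Mathlib

open CategoryTheory

universe v u

/-- A simplicial module in a pre-additive category `C`: objects `M n` together with
face maps `δ n i : M (n+1) ⟶ M n` (representing `∂_{n+1,i}`, meaningful for `0 ≤ i ≤ n+1`)
and degeneracy maps `σ n i : M n ⟶ M (n+1)` (representing `s_{n,i}`, meaningful for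
`0 ≤ i ≤ n`), satisfying the standard simplicial identities.
Here `f ≫ g` denotes "first apply `f`, then `g`". -/
structure SimpMod (C : Type u) [Category.{v} C] [Preadditive C] where
  M : ℕ → C
  δ : ∀ n : ℕ, ℕ → (M (n + 1) ⟶ M n)
  σ : ∀ n : ℕ, ℕ → (M n ⟶ M (n + 1))
  /-- `∂_{n+1,k} ∂_{n+2,j} = ∂_{n+1,j} ∂_{n+2,k+1}` for `j ≤ k ≤ n+1`. -/
  δδ : ∀ n j k, j ≤ k → k ≤ n + 1 →
    δ (n + 1) j ≫ δ n k = δ (n + 1) (k + 1) ≫ δ n j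
  /-- `∂_{n+2,j} s_{n+1,k+1} = s_{n,k} ∂_{n+1,j}` for `j ≤ k ≤ n`. -/
  δσ_lt : ∀ n j k, j ≤ k → k ≤ n →
    σ (n + 1) (k + 1) ≫ δ (n + 1) j = δ n j ≫ σ n k
  /-- `∂_{n+1,j} s_{n,j} = 1` for `j ≤ n`. -/
  δσ_self : ∀ n j, j ≤ n → σ n j ≫ δ n j = 𝟙 (M n)
  /-- `∂_{n+1,j+1} s_{n,j} = 1` for `j ≤ n`. -/
  δσ_succ : ∀ n j, j ≤ n → σ n j ≫ δ n (j + 1) = 𝟙 (M n)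
  /-- `∂_{n+2,j+1} s_{n+1,k} = s_{n,k} ∂_{n+1,j}` for `k < j ≤ n+1`. -/
  δσ_gt : ∀ n j k, k < j → j ≤ n + 1 →
    σ (n + 1) k ≫ δ (n + 1) (j + 1) = δ n j ≫ σ n k
  /-- `s_{n+1,j} s_{n,k} = s_{n+1,k+1} s_{n,j}` for `j ≤ k ≤ n`. -/
  σσ : ∀ n j k, j ≤ k → k ≤ n →
    σ n k ≫ σ (n + 1) j = σ n j ≫ σ (n + 1) (k + 1)

namespace SimpMod

variable {C : Type u} [Category.{v} C] [Preadditive C] (X : SimpMod C)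

/-- The simplicial differential `b_{n+1} = ∑_{i=0}^{n+1} (-1)^i ∂_{n+1,i} : M_{n+1} → M_n`. -/
def b (n : ℕ) : X.M (n + 1) ⟶ X.M n :=
  ∑ i ∈ Finset.range (n + 2), ((-1 : ℤ) ^ i) • X.δ n i

/-- `pAux n k` is the product `(1 - s_{n,n-k+1}∂_{n+1,n-k+2})⋯(1 - s_{n,n}∂_{n+1,n+1})`
of the last `k` Dold–Puppe factors on `M_{n+1}`; thus `pAux n (n+1-i)` is the
Dold–Puppe operator `p_{n+1,i}` (for `i ≤ n+1`), the rightmost factor being applied first. -/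
def pAux (n : ℕ) : ℕ → (X.M (n + 1) ⟶ X.M (n + 1))
  | 0 => 𝟙 (X.M (n + 1))
  | k + 1 => pAux n k ≫ (𝟙 (X.M (n + 1)) - X.δ n (n - k + 1) ≫ X.σ n (n - k))

/-- The Dold–Puppe idempotent `p_n = (1 - s_{n-1,0}∂_{n,1})⋯(1 - s_{n-1,n-1}∂_{n,n}) : M_n → M_n`. -/
def p : ∀ n : ℕ, X.M n ⟶ X.M n
  | 0 => 𝟙 (X.M 0)
  | n + 1 => X.pAux n (n + 1)

end SimpMod

/-- Epstein's homotopy `φ_n = ∑_{i=0}^n (-1)^i s_{n,i} p_{n,i} : M_n → M_{n+1}`. -/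
def SimpMod.φ {C : Type u} [Category.{v} C] [Preadditive C] (X : SimpMod C) :
    ∀ n : ℕ, X.M n ⟶ X.M (n + 1)
  | 0 => X.σ 0 0
  | n + 1 => ∑ i ∈ Finset.range (n + 2),
      ((-1 : ℤ) ^ i) • (X.pAux n (n + 1 - i) ≫ X.σ (n + 1) i)

namespace SimpMod

variable {C : Type u} [Category.{v} C] [Preadditive C] (X : SimpMod C)

lemma pAux_succ (n K : ℕ) :
    X.pAux n (K + 1)
      = X.pAux n K ≫ (𝟙 (X.M (n + 1)) - X.δ n (n - K + 1) ≫ X.σ n (n - K)) := rfl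

lemma pAux_step (n k : ℕ) (h : k ≤ n) :
    X.pAux n (n + 1 - k)
      = X.pAux n (n - k) ≫ (𝟙 (X.M (n + 1)) - X.δ n (k + 1) ≫ X.σ n k) := by
  have h1 : n + 1 - k = (n - k) + 1 := by omega
  have h2 : n - (n - k) = k := by omega
  rw [h1, pAux_succ, h2]

end SimpMod

section
open CategoryTheory CategoryTheory.Limits CategoryTheory.Preadditive SimpMod

variable {C : Type u} [Category.{v} C] [Preadditive C] (X : SimpMod C)

lemma SimpMod.pAux_δ_comm (n : ℕ) : ∀ K j : ℕ, K + j ≤ n + 1 →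
    X.pAux (n + 1) K ≫ X.δ (n + 1) j = X.δ (n + 1) j ≫ X.pAux n K := by
  intro K
  induction K with
  | zero => intro j _; simp [SimpMod.pAux]
  | succ K ih =>
    intro j h
    have hj : j ≤ n - K := by omega
    have hiK : n - K ≤ n := by omega
    rw [pAux_succ, pAux_succ,
      show n + 1 - K + 1 = (n - K) + 2 by omega,
      show n + 1 - K = (n - K) + 1 by omega]
    have hslt : X.σ (n + 1) ((n - K) + 1) ≫ X.δ (n + 1) j = X.δ n j ≫ X.σ n (n - K) :=
      X.δσ_lt n j (n - K) hj hiK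
    have hdd : X.δ (n + 1) ((n - K) + 2) ≫ X.δ n j = X.δ (n + 1) j ≫ X.δ n ((n - K) + 1) := by
      have h2 := X.δδ n j ((n - K) + 1) (by omega) (by omega)
      rw [show n - K + 1 + 1 = (n - K) + 2 by omega] at h2
      exact h2.symm
    have key : (𝟙 (X.M (n + 1 + 1)) - X.δ (n + 1) ((n - K) + 2) ≫ X.σ (n + 1) ((n - K) + 1))
          ≫ X.δ (n + 1) j
        = X.δ (n + 1) j ≫ (𝟙 (X.M (n + 1)) - X.δ n ((n - K) + 1) ≫ X.σ n (n - K)) := by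
      rw [sub_comp, comp_sub, Category.id_comp, Category.comp_id, Category.assoc, hslt,
        ← Category.assoc, hdd, Category.assoc]
    rw [Category.assoc, key, ← Category.assoc, ih j (by omega), Category.assoc]

lemma SimpMod.pAux_δ_zero_aux (n : ℕ) : ∀ d : ℕ, ∀ i : ℕ, i ≤ n + 1 → i + 1 + d ≤ n + 2 →
    X.pAux (n + 1) (n + 2 - i) ≫ X.δ (n + 1) (i + 1 + d) = 0 := by
  intro d
  induction d with
  | zero =>
    intro i h1 _
    rw [show n + 2 - i = n + 1 + 1 - i by omega, X.pAux_step (n + 1) i h1,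
      show i + 1 + 0 = i + 1 by omega, Category.assoc, sub_comp, Category.id_comp,
      Category.assoc, X.δσ_succ (n + 1) i h1, Category.comp_id, sub_self, comp_zero]
  | succ d ih =>
    intro i h1 h2
    rw [show n + 2 - i = n + 1 + 1 - i by omega, X.pAux_step (n + 1) i h1,
      show n + 1 - i = n + 2 - (i + 1) by omega]
    have hgt : X.σ (n + 1) i ≫ X.δ (n + 1) (i + 1 + (d + 1)) = X.δ n (i + 1 + d) ≫ X.σ n i := by
      have := X.δσ_gt n (i + 1 + d) i (by omega) (by omega)
      rw [show i + 1 + d + 1 = i + 1 + (d + 1) by omega] at this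
      exact this
    have hdd : X.δ (n + 1) (i + 1) ≫ X.δ n (i + 1 + d)
        = X.δ (n + 1) (i + 1 + (d + 1)) ≫ X.δ n (i + 1) := by
      have := X.δδ n (i + 1) (i + 1 + d) (by omega) (by omega)
      rw [show i + 1 + d + 1 = i + 1 + (d + 1) by omega] at this
      exact this
    have hz : X.pAux (n + 1) (n + 2 - (i + 1)) ≫ X.δ (n + 1) ((i + 1) + 1 + d) = 0 :=
      ih (i + 1) (by omega) (by omega)
    rw [show i + 1 + 1 + d = i + 1 + (d + 1) by omega] at hz
    rw [Category.assoc, sub_comp, Category.id_comp, Category.assoc, hgt,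
      ← Category.assoc (X.δ (n + 1) (i + 1)), hdd, comp_sub, ← Category.assoc,
      ← Category.assoc, hz, zero_comp, zero_comp, sub_zero]

lemma SimpMod.pAux_δ_zero (n i r : ℕ) (h1 : i < r) (h2 : r ≤ n + 2) (h3 : i ≤ n + 1) :
    X.pAux (n + 1) (n + 2 - i) ≫ X.δ (n + 1) r = 0 := by
  have := X.pAux_δ_zero_aux n (r - i - 1) i h3 (by omega)
  rwa [show i + 1 + (r - i - 1) = r by omega] at this

end

section
open CategoryTheory CategoryTheory.Limits CategoryTheory.Preadditive SimpMod Finset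

variable {C : Type u} [Category.{v} C] [Preadditive C] (X : SimpMod C)

lemma SimpMod.corner (n a : ℕ) :
    ∑ j ∈ Finset.Ico (a + 1) (n + 3), ∑ t ∈ Finset.Ico (a + 1) (n + 2),
      ((-1 : ℤ) ^ (j + t)) • (X.δ (n + 1) j ≫ X.δ n t) = 0 := by
  rw [← Finset.sum_product']
  set P := (Finset.Ico (a + 1) (n + 3)) ×ˢ (Finset.Ico (a + 1) (n + 2)) with hP
  rw [← Finset.sum_filter_add_sum_filter_not P (fun x => x.1 ≤ x.2)]
  have key : ∑ x ∈ P.filter (fun x => x.1 ≤ x.2),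
        ((-1 : ℤ) ^ (x.1 + x.2)) • (X.δ (n + 1) x.1 ≫ X.δ n x.2)
      = ∑ x ∈ P.filter (fun x => ¬ x.1 ≤ x.2),
        (-(((-1 : ℤ) ^ (x.1 + x.2)) • (X.δ (n + 1) x.1 ≫ X.δ n x.2))) := by
    refine Finset.sum_nbij' (fun x => (x.2 + 1, x.1)) (fun y => (y.2, y.1 - 1)) ?_ ?_ ?_ ?_ ?_
    · intro x hx
      simp only [hP, Finset.mem_filter, Finset.mem_product, Finset.mem_Ico] at hx ⊢
      omega
    · intro y hy
      simp only [hP, Finset.mem_filter, Finset.mem_product, Finset.mem_Ico] at hy ⊢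
      omega
    · intro x hx; rfl
    · intro y hy
      simp only [hP, Finset.mem_filter, Finset.mem_product, Finset.mem_Ico] at hy
      have : y.1 - 1 + 1 = y.1 := by omega
      simp [this]
    · intro x hx
      simp only [hP, Finset.mem_filter, Finset.mem_product, Finset.mem_Ico] at hx
      have hdd := X.δδ n x.1 x.2 (by omega) (by omega)
      rw [hdd]
      have hsg : ((-1 : ℤ) ^ (x.2 + 1 + x.1)) = -((-1 : ℤ) ^ (x.1 + x.2)) := by
        rw [show x.2 + 1 + x.1 = (x.1 + x.2) + 1 by omega, pow_succ]
        ring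
      rw [hsg, neg_smul, neg_neg]
  rw [key, Finset.sum_neg_distrib, neg_add_cancel]

lemma SimpMod.keyL (n k : ℕ) (hk : k ≤ n + 1) :
    X.pAux (n + 1) (n + 1 - k) ≫ X.δ (n + 1) (k + 1)
      = ∑ j ∈ Finset.Ico (k + 1) (n + 3),
          ((-1 : ℤ) ^ (j + k + 1)) • (X.δ (n + 1) j ≫ X.pAux n (n + 1 - k)) := by
  rcases eq_or_lt_of_le hk with hkeq | hklt
  · -- base : k = n + 1
    subst hkeq
    rw [Finset.sum_eq_sum_Ico_succ_bot (show n + 1 + 1 < n + 3 by omega),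
      show n + 1 + 1 + 1 = n + 3 by omega, Finset.Ico_self, Finset.sum_empty, add_zero,
      show n + 1 - (n + 1) = 0 by omega,
      show (-1 : ℤ) ^ (n + 1 + 1 + (n + 1) + 1) = 1 by
        rw [show n + 1 + 1 + (n + 1) + 1 = 2 * (n + 2) by omega, pow_mul]; norm_num,
      one_smul]
    show 𝟙 _ ≫ _ = _ ≫ 𝟙 _
    rw [Category.id_comp, Category.comp_id]
  · -- step : k ≤ n
    have hkn : k ≤ n := by omega
    have ih1 := SimpMod.keyL n (k + 1) (by omega)
    -- the sum that vanishes
    have hW : (∑ j ∈ Finset.Ico (k + 1) (n + 3),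
          ((-1 : ℤ) ^ j) • (X.δ (n + 1) j ≫ (X.pAux n (n - k) ≫ X.δ n (k + 1)))) = 0 := by
      rcases eq_or_lt_of_le hkn with hkn' | hkn'
      · -- k = n
        subst hkn'
        rw [show k - k = 0 by omega,
          Finset.sum_eq_sum_Ico_succ_bot (show k + 1 < k + 3 by omega),
          Finset.sum_eq_sum_Ico_succ_bot (show k + 1 + 1 < k + 3 by omega),
          show k + 1 + 1 + 1 = k + 3 by omega, Finset.Ico_self, Finset.sum_empty, add_zero]
        have hdd := X.δδ k (k + 1) (k + 1) le_rfl le_rfl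
        simp only [SimpMod.pAux, Category.id_comp]
        rw [hdd, show ((-1 : ℤ)) ^ (k + 1 + 1) = -((-1 : ℤ) ^ (k + 1)) by rw [pow_succ]; ring,
          neg_smul, add_neg_cancel]
      · -- k < n
        obtain ⟨m, rfl⟩ : ∃ m, n = m + 1 := ⟨n - 1, by omega⟩
        have ih2 := SimpMod.keyL m k (by omega)
        calc ∑ j ∈ Finset.Ico (k + 1) (m + 1 + 3), ((-1 : ℤ) ^ j) •
              (X.δ (m + 1 + 1) j ≫ (X.pAux (m + 1) (m + 1 - k) ≫ X.δ (m + 1) (k + 1)))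
            = ∑ j ∈ Finset.Ico (k + 1) (m + 1 + 3), ∑ t ∈ Finset.Ico (k + 1) (m + 3),
              (((-1 : ℤ) ^ (k + 1)) * ((-1 : ℤ) ^ (j + t))) •
                ((X.δ (m + 2) j ≫ X.δ (m + 1) t) ≫ X.pAux m (m + 1 - k)) := by
              refine Finset.sum_congr rfl fun j _ => ?_
              rw [ih2, Preadditive.comp_sum, Finset.smul_sum]
              refine Finset.sum_congr rfl fun t _ => ?_
              simp only [Preadditive.comp_zsmul, smul_smul, Category.assoc]
              congr 1
              rw [← pow_add, ← pow_add, show j + (t + k + 1) = k + 1 + (j + t) by omega]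
          _ = ((-1 : ℤ) ^ (k + 1)) • ((∑ j ∈ Finset.Ico (k + 1) (m + 1 + 3),
                ∑ t ∈ Finset.Ico (k + 1) (m + 3), ((-1 : ℤ) ^ (j + t)) •
                  (X.δ (m + 2) j ≫ X.δ (m + 1) t)) ≫ X.pAux m (m + 1 - k)) := by
              simp only [Preadditive.sum_comp, Finset.smul_sum, Preadditive.zsmul_comp,
                smul_smul]
          _ = 0 := by
              have hc0 : (∑ j ∈ Finset.Ico (k + 1) (m + 1 + 3),
                  ∑ t ∈ Finset.Ico (k + 1) (m + 3), ((-1 : ℤ) ^ (j + t)) •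
                    (X.δ (m + 2) j ≫ X.δ (m + 1) t)) = 0 := X.corner (m + 1) k
              rw [hc0, zero_comp, smul_zero]
    -- assemble the inductive step
    have hcomm := X.pAux_δ_comm n (n - k) (k + 1) (by omega)
    rw [show n + 1 - (k + 1) = n - k by omega] at ih1
    have hL : X.pAux (n + 1) (n + 1 - k) ≫ X.δ (n + 1) (k + 1)
        = X.δ (n + 1) (k + 1) ≫ X.pAux n (n - k)
          - ∑ j ∈ Finset.Ico (k + 1 + 1) (n + 3),
              ((-1 : ℤ) ^ (j + (k + 1) + 1)) • (X.δ (n + 1) j ≫ X.pAux n (n - k)) := by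
      rw [show n + 1 - k = n + 1 + 1 - (k + 1) by omega,
        X.pAux_step (n + 1) (k + 1) (by omega),
        show n + 1 - (k + 1) = n - k by omega,
        Category.assoc, sub_comp, Category.id_comp, Category.assoc,
        X.δσ_self (n + 1) (k + 1) (by omega), Category.comp_id, comp_sub, hcomm, ih1]
    rw [hL]
    have hzero2 : (∑ j ∈ Finset.Ico (k + 1) (n + 3),
        ((-1 : ℤ) ^ (j + k + 1)) • (X.δ (n + 1) j ≫ (X.pAux n (n - k) ≫ X.δ n (k + 1)))) = 0 := by
      have hc : ∀ j : ℕ, ((-1 : ℤ) ^ (j + k + 1)) •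
            (X.δ (n + 1) j ≫ (X.pAux n (n - k) ≫ X.δ n (k + 1)))
          = ((-1 : ℤ) ^ (k + 1)) • (((-1 : ℤ) ^ j) •
            (X.δ (n + 1) j ≫ (X.pAux n (n - k) ≫ X.δ n (k + 1)))) := by
        intro j
        rw [smul_smul, ← pow_add, show k + 1 + j = j + k + 1 by omega]
      rw [Finset.sum_congr rfl fun j _ => hc j, ← Finset.smul_sum, hW, smul_zero]
    have hsp : ∀ j : ℕ, X.δ (n + 1) j ≫ X.pAux n (n + 1 - k)
        = X.δ (n + 1) j ≫ X.pAux n (n - k)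
          - (X.δ (n + 1) j ≫ (X.pAux n (n - k) ≫ X.δ n (k + 1))) ≫ X.σ n k := by
      intro j
      rw [X.pAux_step n k hkn]
      simp only [comp_sub, Category.comp_id, Category.assoc]
    -- rewrite the RHS
    calc X.δ (n + 1) (k + 1) ≫ X.pAux n (n - k)
          - ∑ j ∈ Finset.Ico (k + 1 + 1) (n + 3),
              ((-1 : ℤ) ^ (j + (k + 1) + 1)) • (X.δ (n + 1) j ≫ X.pAux n (n - k))
        = ∑ j ∈ Finset.Ico (k + 1) (n + 3),
            ((-1 : ℤ) ^ (j + k + 1)) • (X.δ (n + 1) j ≫ X.pAux n (n - k)) := by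
          rw [Finset.sum_eq_sum_Ico_succ_bot (show k + 1 < n + 3 by omega),
            show ((-1 : ℤ) ^ (k + 1 + k + 1)) = 1 by
              rw [show k + 1 + k + 1 = 2 * (k + 1) by omega, pow_mul]; norm_num,
            one_smul, sub_eq_add_neg]
          congr 1
          rw [← Finset.sum_neg_distrib]
          refine Finset.sum_congr rfl fun j _ => ?_
          rw [← neg_smul]
          congr 1
          rw [show j + (k + 1) + 1 = (j + k + 1) + 1 by omega, pow_succ]
          ring
      _ = ∑ j ∈ Finset.Ico (k + 1) (n + 3),
            ((-1 : ℤ) ^ (j + k + 1)) • (X.δ (n + 1) j ≫ X.pAux n (n + 1 - k)) := by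
          symm
          have hstep : ∀ j : ℕ, ((-1 : ℤ) ^ (j + k + 1)) • (X.δ (n + 1) j ≫ X.pAux n (n + 1 - k))
              = ((-1 : ℤ) ^ (j + k + 1)) • (X.δ (n + 1) j ≫ X.pAux n (n - k))
                - ((-1 : ℤ) ^ (j + k + 1)) •
                  ((X.δ (n + 1) j ≫ (X.pAux n (n - k) ≫ X.δ n (k + 1))) ≫ X.σ n k) := by
            intro j
            rw [hsp j, smul_sub]
          rw [Finset.sum_congr rfl fun j _ => hstep j, Finset.sum_sub_distrib]
          have hpull : (∑ j ∈ Finset.Ico (k + 1) (n + 3), ((-1 : ℤ) ^ (j + k + 1)) •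
                ((X.δ (n + 1) j ≫ (X.pAux n (n - k) ≫ X.δ n (k + 1))) ≫ X.σ n k))
              = (∑ j ∈ Finset.Ico (k + 1) (n + 3), ((-1 : ℤ) ^ (j + k + 1)) •
                (X.δ (n + 1) j ≫ (X.pAux n (n - k) ≫ X.δ n (k + 1)))) ≫ X.σ n k := by
            rw [Preadditive.sum_comp]
            exact Finset.sum_congr rfl fun j _ => (Preadditive.zsmul_comp _ _ _).symm
          rw [hpull, hzero2, zero_comp, sub_zero]

termination_by (n, n + 1 - k)
decreasing_by
  · exact Prod.Lex.right n (by omega)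
  · exact Prod.Lex.left _ _ (by omega)

end

section
open CategoryTheory CategoryTheory.Limits CategoryTheory.Preadditive SimpMod Finset

variable {C : Type u} [Category.{v} C] [Preadditive C] (X : SimpMod C)

lemma SimpMod.sib (n i : ℕ) (hi : i ≤ n + 2) :
    (X.pAux (n + 1) (n + 2 - i) ≫ X.σ (n + 2) i) ≫ X.b (n + 2)
      = ∑ j ∈ Finset.range i,
          ((-1 : ℤ) ^ j) • (X.δ (n + 1) j ≫ (X.pAux n (n + 2 - i) ≫ X.σ (n + 1) (i - 1))) := by
  have hb : X.b (n + 2) = ∑ l ∈ Finset.range (n + 2 + 2), ((-1 : ℤ) ^ l) • X.δ (n + 2) l := rfl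
  rw [hb, Preadditive.comp_sum]
  have hterm : ∀ l ∈ Finset.range (n + 2 + 2),
      (X.pAux (n + 1) (n + 2 - i) ≫ X.σ (n + 2) i) ≫ (((-1 : ℤ) ^ l) • X.δ (n + 2) l)
        = ((-1 : ℤ) ^ l) • (X.pAux (n + 1) (n + 2 - i) ≫ (X.σ (n + 2) i ≫ X.δ (n + 2) l)) := by
    intro l _
    rw [Preadditive.comp_zsmul, Category.assoc]
  rw [Finset.sum_congr rfl hterm, Finset.range_eq_Ico,
    ← Finset.sum_Ico_consecutive _ (Nat.zero_le i) (show i ≤ n + 2 + 2 by omega),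
    Finset.sum_eq_sum_Ico_succ_bot (show i < n + 2 + 2 by omega),
    Finset.sum_eq_sum_Ico_succ_bot (show i + 1 < n + 2 + 2 by omega)]
  have htail : ∑ l ∈ Finset.Ico (i + 1 + 1) (n + 2 + 2),
      ((-1 : ℤ) ^ l) • (X.pAux (n + 1) (n + 2 - i) ≫ (X.σ (n + 2) i ≫ X.δ (n + 2) l)) = 0 := by
    refine Finset.sum_eq_zero fun l hl => ?_
    simp only [Finset.mem_Ico] at hl
    have hgt : X.σ (n + 2) i ≫ X.δ (n + 2) l = X.δ (n + 1) (l - 1) ≫ X.σ (n + 1) i := by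
      have h := X.δσ_gt (n + 1) (l - 1) i (by omega) (by omega)
      rw [show l - 1 + 1 = l by omega] at h
      exact h
    rw [hgt, ← Category.assoc,
      X.pAux_δ_zero n i (l - 1) (by omega) (by omega) (by omega), zero_comp, smul_zero]
  rw [htail, X.δσ_self (n + 2) i hi, X.δσ_succ (n + 2) i hi]
  simp only [Category.comp_id]
  rw [show ((-1 : ℤ) ^ (i + 1)) = -((-1 : ℤ) ^ i) by rw [pow_succ]; ring, neg_smul,
    add_zero, add_neg_cancel, add_zero, ← Finset.range_eq_Ico]
  refine Finset.sum_congr rfl fun j hj => ?_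
  simp only [Finset.mem_range] at hj
  have hlt : X.σ (n + 2) i ≫ X.δ (n + 2) j = X.δ (n + 1) j ≫ X.σ (n + 1) (i - 1) := by
    have h := X.δσ_lt (n + 1) j (i - 1) (by omega) (by omega)
    rw [show i - 1 + 1 = i by omega] at h
    exact h
  rw [hlt, ← Category.assoc, X.pAux_δ_comm n (n + 2 - i) j (by omega), Category.assoc]

lemma SimpMod.perk (n k : ℕ) (hk : k ≤ n + 1) :
    ∑ j ∈ Finset.Ico (k + 1) (n + 3),
        ((-1 : ℤ) ^ (j + k)) • (X.δ (n + 1) j ≫ (X.pAux n (n + 1 - k) ≫ X.σ (n + 1) k))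
      = X.pAux (n + 1) (n + 2 - k) - X.pAux (n + 1) (n + 1 - k) := by
  have hkey := X.keyL n k hk
  have h1 : ∑ j ∈ Finset.Ico (k + 1) (n + 3),
        ((-1 : ℤ) ^ (j + k)) • (X.δ (n + 1) j ≫ (X.pAux n (n + 1 - k) ≫ X.σ (n + 1) k))
      = -((∑ j ∈ Finset.Ico (k + 1) (n + 3),
          ((-1 : ℤ) ^ (j + k + 1)) • (X.δ (n + 1) j ≫ X.pAux n (n + 1 - k))) ≫ X.σ (n + 1) k) := by
    rw [Preadditive.sum_comp, ← Finset.sum_neg_distrib]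
    refine Finset.sum_congr rfl fun j _ => ?_
    rw [Preadditive.zsmul_comp, Category.assoc, ← neg_smul]
    congr 1
    rw [pow_succ]
    ring
  rw [h1, ← hkey, show n + 2 - k = n + 1 + 1 - k by omega, X.pAux_step (n + 1) k hk,
    comp_sub, Category.comp_id, sub_sub_cancel_left, Category.assoc]

lemma SimpMod.clause_succ (n : ℕ) :
    X.φ (n + 2) ≫ X.b (n + 2) + X.b (n + 1) ≫ X.φ (n + 1)
      = X.p (n + 2) - 𝟙 (X.M (n + 2)) := by
  have hT1 : X.φ (n + 2) ≫ X.b (n + 2)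
      = ∑ k ∈ Finset.range (n + 2), ∑ j ∈ Finset.range (k + 1),
          (-((-1 : ℤ) ^ (j + k))) • (X.δ (n + 1) j ≫ (X.pAux n (n + 1 - k) ≫ X.σ (n + 1) k)) := by
    have hφ : X.φ (n + 2) = ∑ i ∈ Finset.range (n + 3),
        ((-1 : ℤ) ^ i) • (X.pAux (n + 1) (n + 2 - i) ≫ X.σ (n + 2) i) := rfl
    rw [hφ, Preadditive.sum_comp]
    have h1 : ∀ i ∈ Finset.range (n + 3),
        (((-1 : ℤ) ^ i) • (X.pAux (n + 1) (n + 2 - i) ≫ X.σ (n + 2) i)) ≫ X.b (n + 2)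
          = ((-1 : ℤ) ^ i) • ∑ j ∈ Finset.range i,
              ((-1 : ℤ) ^ j) • (X.δ (n + 1) j ≫ (X.pAux n (n + 2 - i) ≫ X.σ (n + 1) (i - 1))) := by
      intro i hi
      simp only [Finset.mem_range] at hi
      rw [Preadditive.zsmul_comp, X.sib n i (by omega)]
    rw [Finset.sum_congr rfl h1, Finset.sum_range_succ']
    simp only [Finset.range_zero, Finset.sum_empty, smul_zero, add_zero]
    refine Finset.sum_congr rfl fun k hk => ?_
    simp only [Finset.mem_range] at hk
    rw [show n + 2 - (k + 1) = n + 1 - k by omega, show k + 1 - 1 = k by omega,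
      Finset.smul_sum]
    refine Finset.sum_congr rfl fun j hj => ?_
    rw [smul_smul]
    congr 1
    ring
  have hT2 : X.b (n + 1) ≫ X.φ (n + 1)
      = ∑ k ∈ Finset.range (n + 2), ∑ j ∈ Finset.range (n + 3),
          ((-1 : ℤ) ^ (j + k)) • (X.δ (n + 1) j ≫ (X.pAux n (n + 1 - k) ≫ X.σ (n + 1) k)) := by
    have hb : X.b (n + 1) = ∑ j ∈ Finset.range (n + 3), ((-1 : ℤ) ^ j) • X.δ (n + 1) j := rfl
    have hφ1 : X.φ (n + 1) = ∑ k ∈ Finset.range (n + 2),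
        ((-1 : ℤ) ^ k) • (X.pAux n (n + 1 - k) ≫ X.σ (n + 1) k) := rfl
    rw [hb, hφ1, Preadditive.sum_comp]
    have h2 : ∀ j ∈ Finset.range (n + 3),
        (((-1 : ℤ) ^ j) • X.δ (n + 1) j) ≫ (∑ k ∈ Finset.range (n + 2),
            ((-1 : ℤ) ^ k) • (X.pAux n (n + 1 - k) ≫ X.σ (n + 1) k))
          = ∑ k ∈ Finset.range (n + 2),
              ((-1 : ℤ) ^ (j + k)) • (X.δ (n + 1) j ≫ (X.pAux n (n + 1 - k) ≫ X.σ (n + 1) k)) := by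
      intro j _
      rw [Preadditive.zsmul_comp, Preadditive.comp_sum, Finset.smul_sum]
      refine Finset.sum_congr rfl fun k _ => ?_
      rw [Preadditive.comp_zsmul, smul_smul, ← pow_add]
    rw [Finset.sum_congr rfl h2, Finset.sum_comm]
  rw [hT1, hT2, ← Finset.sum_add_distrib]
  have h3 : ∀ k ∈ Finset.range (n + 2),
      ((∑ j ∈ Finset.range (k + 1),
          (-((-1 : ℤ) ^ (j + k))) • (X.δ (n + 1) j ≫ (X.pAux n (n + 1 - k) ≫ X.σ (n + 1) k)))
        + ∑ j ∈ Finset.range (n + 3),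
          ((-1 : ℤ) ^ (j + k)) • (X.δ (n + 1) j ≫ (X.pAux n (n + 1 - k) ≫ X.σ (n + 1) k)))
      = X.pAux (n + 1) (n + 2 - k) - X.pAux (n + 1) (n + 1 - k) := by
    intro k hk
    simp only [Finset.mem_range] at hk
    have hsplit : (∑ j ∈ Finset.range (n + 3),
          ((-1 : ℤ) ^ (j + k)) • (X.δ (n + 1) j ≫ (X.pAux n (n + 1 - k) ≫ X.σ (n + 1) k)))
        = (∑ j ∈ Finset.range (k + 1),
            ((-1 : ℤ) ^ (j + k)) • (X.δ (n + 1) j ≫ (X.pAux n (n + 1 - k) ≫ X.σ (n + 1) k)))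
          + ∑ j ∈ Finset.Ico (k + 1) (n + 3),
            ((-1 : ℤ) ^ (j + k)) • (X.δ (n + 1) j ≫ (X.pAux n (n + 1 - k) ≫ X.σ (n + 1) k)) := by
      rw [Finset.range_eq_Ico, Finset.range_eq_Ico]
      exact (Finset.sum_Ico_consecutive (fun j => ((-1 : ℤ) ^ (j + k)) •
          (X.δ (n + 1) j ≫ (X.pAux n (n + 1 - k) ≫ X.σ (n + 1) k))) (Nat.zero_le (k + 1))
        (show k + 1 ≤ n + 3 by omega)).symm
    rw [hsplit]
    simp only [neg_smul]
    rw [Finset.sum_neg_distrib, neg_add_cancel_left]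
    exact X.perk n k (by omega)
  rw [Finset.sum_congr rfl h3]
  have h4 : ∀ k ∈ Finset.range (n + 2),
      X.pAux (n + 1) (n + 2 - k) - X.pAux (n + 1) (n + 1 - k)
        = X.pAux (n + 1) (n + 2 - k) - X.pAux (n + 1) (n + 2 - (k + 1)) := by
    intro k _
    rw [show n + 2 - (k + 1) = n + 1 - k by omega]
  rw [Finset.sum_congr rfl h4, Finset.sum_range_sub' (fun k => X.pAux (n + 1) (n + 2 - k))]
  rw [show n + 2 - (n + 2) = 0 by omega, show n + 2 - 0 = n + 2 by omega]
  rfl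

lemma SimpMod.clause_zero :
    X.φ 1 ≫ X.b 1 + X.b 0 ≫ X.φ 0 = X.p 1 - 𝟙 (X.M 1) := by
  have e1 : X.σ 1 0 ≫ X.δ 1 0 = 𝟙 _ := X.δσ_self 1 0 (by omega)
  have e2 : X.σ 1 0 ≫ X.δ 1 1 = 𝟙 _ := X.δσ_succ 1 0 (by omega)
  have e3 : X.σ 1 0 ≫ X.δ 1 2 = X.δ 0 1 ≫ X.σ 0 0 := X.δσ_gt 0 1 0 (by omega) (by omega)
  have e4 : X.σ 1 1 ≫ X.δ 1 0 = X.δ 0 0 ≫ X.σ 0 0 := X.δσ_lt 0 0 0 (by omega) (by omega)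
  have e5 : X.σ 1 1 ≫ X.δ 1 1 = 𝟙 _ := X.δσ_self 1 1 (by omega)
  have e6 : X.σ 1 1 ≫ X.δ 1 2 = 𝟙 _ := X.δσ_succ 1 1 (by omega)
  have e7 : X.σ 0 0 ≫ X.δ 0 1 = 𝟙 _ := X.δσ_succ 0 0 (by omega)
  have e7r : ∀ {Z : C} (f : X.M 0 ⟶ Z), X.σ 0 0 ≫ X.δ 0 1 ≫ f = f := fun f => by
    rw [← Category.assoc, e7, Category.id_comp]
  show (∑ i ∈ Finset.range 2, ((-1 : ℤ) ^ i) • (X.pAux 0 (0 + 1 - i) ≫ X.σ 1 i)) ≫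
        (∑ i ∈ Finset.range 3, ((-1 : ℤ) ^ i) • X.δ 1 i)
      + (∑ i ∈ Finset.range 2, ((-1 : ℤ) ^ i) • X.δ 0 i) ≫ X.σ 0 0
    = X.pAux 0 1 - 𝟙 (X.M 1)
  simp only [Finset.sum_range_succ, Finset.sum_range_zero, zero_add, pow_zero, pow_one,
    one_smul, neg_smul, SimpMod.pAux, Category.id_comp, Nat.add_zero, Nat.zero_add,
    Nat.sub_self, Nat.sub_zero]
  norm_num
  simp only [sub_comp, comp_sub, add_comp, comp_add, neg_comp, comp_neg, Category.assoc,
    Category.id_comp, Category.comp_id, e1, e2, e3, e4, e5, e6, e7, e7r]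
  abel

end

/-- For a simplicial module `M`, the operator
`φ_n = ∑_{i=0}^n (-1)^i s_{n,i} p_{n,i}` satisfies `b_{n+1} φ_n + φ_{n-1} b_n = p_n − 1`.
(First clause: degree `n+1`; second clause: degree `0`, where the `φ_{-1} b_0` term is absent.) -/

theorem epstein_homotopy {C : Type u} [Category.{v} C] [Preadditive C]
    (X : SimpMod C) :
    (∀ n : ℕ, X.φ (n + 1) ≫ X.b (n + 1) + X.b n ≫ X.φ n
        = X.p (n + 1) - 𝟙 (X.M (n + 1))) ∧
    (X.φ 0 ≫ X.b 0 = X.p 0 - 𝟙 (X.M 0)) := by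
  constructor
  · intro n
    match n with
    | 0 => exact X.clause_zero
    | Nat.succ n => exact X.clause_succ n
  · have f1 : X.σ 0 0 ≫ X.δ 0 0 = 𝟙 (X.M 0) := X.δσ_self 0 0 (by omega)
    have f2 : X.σ 0 0 ≫ X.δ 0 1 = 𝟙 (X.M 0) := X.δσ_succ 0 0 (by omega)
    show X.σ 0 0 ≫ (∑ i ∈ Finset.range 2, ((-1 : ℤ) ^ i) • X.δ 0 i)
        = 𝟙 (X.M 0) - 𝟙 (X.M 0)
    simp [Finset.sum_range_succ, f1, f2]
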